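/- Let $a_1,a_2\geq0$ with $a_1+a_2>0$, $b>0$, $N\geq3$, $p\in(2,\frac{4N}{N-2})$, and suppose $G(1)<0$ where $G(t)=\frac{N}{2}t^Na_1+\frac{N+2}{2}t^{N+2}a_2-\frac{2(N+p)}{p}t^{N+p}b$. Then there exists a unique $t_0\in(0,1)$ with $G(t_0)=0$. -/
import Mathlib


open Real

theorem stmt_12 (N : ℕ) (hN : 3 ≤ N) (p a₁ a₂ b : ℝ)
    (hp : 2 < p) (hp' : p < 4 * (N : ℝ) / ((N : ℝ) - 2))
    (ha₁ : 0 ≤ a₁) (ha₂ : 0 ≤ a₂) (hsum : 0 < a₁ + a₂) (hb : 0 < b)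
    (hG1 : (N : ℝ) / 2 * a₁ + ((N : ℝ) + 2) / 2 * a₂ - 2 * ((N : ℝ) + p) / p * b < 0) :
    ∃! t₀ : ℝ, t₀ ∈ Set.Ioo (0 : ℝ) 1 ∧
      (N : ℝ) / 2 * t₀ ^ (N : ℝ) * a₁ + ((N : ℝ) + 2) / 2 * t₀ ^ ((N : ℝ) + 2) * a₂
        - 2 * ((N : ℝ) + p) / p * t₀ ^ ((N : ℝ) + p) * b = 0 := by
  have hNpos : (0:ℝ) < N := by exact_mod_cast Nat.lt_of_lt_of_le (by norm_num) hN
  have hp0 : (0:ℝ) < p := by linarith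
  set A : ℝ := (N:ℝ) / 2 * a₁ with hA_def
  set B : ℝ := ((N:ℝ) + 2) / 2 * a₂ with hB_def
  set C : ℝ := 2 * ((N:ℝ) + p) / p * b with hC_def
  have hA : 0 ≤ A := by positivity
  have hB : 0 ≤ B := by positivity
  have hC : 0 < C := by positivity
  have hABC : A + B - C < 0 := hG1
  have hp2 : 0 < p - 2 := by linarith
  set φ : ℝ → ℝ := fun t => A * t ^ (-2:ℝ) + B - C * t ^ (p - 2) with hφ_def
  -- factorization
  have hfactor : ∀ t : ℝ, 0 < t →
      (N : ℝ) / 2 * t ^ (N : ℝ) * a₁ + ((N : ℝ) + 2) / 2 * t ^ ((N : ℝ) + 2) * a₂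
        - 2 * ((N : ℝ) + p) / p * t ^ ((N : ℝ) + p) * b = t ^ ((N:ℝ) + 2) * φ t := by
    intro t ht
    have h1 : t ^ ((N:ℝ) + 2) * t ^ (-2:ℝ) = t ^ (N:ℝ) := by
      rw [← Real.rpow_add ht]; ring_nf
    have h2 : t ^ ((N:ℝ) + 2) * t ^ (p - 2) = t ^ ((N:ℝ) + p) := by
      rw [← Real.rpow_add ht]; ring_nf
    simp only [hφ_def, hA_def, hB_def, hC_def]
    linarith [congrArg (fun x => ((N:ℝ)/2 * a₁) * x) h1,
      congrArg (fun x => (2 * ((N:ℝ) + p) / p * b) * x) h2,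
      mul_comm (t ^ ((N:ℝ) + 2)) (((N:ℝ) + 2) / 2 * a₂)]
  have hiff : ∀ t : ℝ, 0 < t →
      ((N : ℝ) / 2 * t ^ (N : ℝ) * a₁ + ((N : ℝ) + 2) / 2 * t ^ ((N : ℝ) + 2) * a₂
        - 2 * ((N : ℝ) + p) / p * t ^ ((N : ℝ) + p) * b = 0 ↔ φ t = 0) := by
    intro t ht
    rw [hfactor t ht]
    constructor
    · intro h
      rcases mul_eq_zero.mp h with h' | h'
      · exact absurd h' (ne_of_gt (Real.rpow_pos_of_pos ht _))
      · exact h'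
    · intro h; rw [h, mul_zero]
  -- strict antitonicity of φ on (0,∞)
  have hmono : ∀ s t : ℝ, 0 < s → s < t → φ t < φ s := by
    intro s t hs hst
    have h1 : t ^ (-2:ℝ) ≤ s ^ (-2:ℝ) := by
      rw [Real.rpow_neg hs.le, Real.rpow_neg (by linarith)]
      have h2 : s ^ (2:ℝ) ≤ t ^ (2:ℝ) := Real.rpow_le_rpow hs.le hst.le (by norm_num)
      exact inv_anti₀ (Real.rpow_pos_of_pos hs 2) h2
    have h3 : s ^ (p - 2) < t ^ (p - 2) := Real.rpow_lt_rpow hs.le hst hp2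
    have h4 : A * t ^ (-2:ℝ) ≤ A * s ^ (-2:ℝ) := mul_le_mul_of_nonneg_left h1 hA
    have h5 : C * s ^ (p - 2) < C * t ^ (p - 2) := by
      exact mul_lt_mul_of_pos_left h3 hC
    simp only [hφ_def]
    linarith
  have hφ1 : φ 1 < 0 := by
    simp only [hφ_def, Real.one_rpow]
    linarith
  -- choose ε with φ ε ≥ 0
  obtain ⟨ε, hε0, hε1, hφε⟩ : ∃ ε : ℝ, 0 < ε ∧ ε < 1 ∧ 0 ≤ φ ε := by
    have hcases : 0 < A ∨ 0 < B := by
      rcases lt_or_ge 0 a₁ with h | h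
      · left; positivity
      · right
        have ha₁0 : a₁ = 0 := le_antisymm h ha₁
        have : 0 < a₂ := by linarith
        positivity
    rcases hcases with hApos | hBpos
    · refine ⟨min (1/2) (Real.sqrt (A / C)), ?_, ?_, ?_⟩
      · apply lt_min (by norm_num)
        exact Real.sqrt_pos.mpr (by positivity)
      · exact lt_of_le_of_lt (min_le_left _ _) (by norm_num)
      · set ε := min (1/2) (Real.sqrt (A / C)) with hε_def
        have hε0 : 0 < ε := by
          apply lt_min (by norm_num)
          exact Real.sqrt_pos.mpr (by positivity)
        have hε1 : ε ≤ 1 := le_trans (min_le_left _ _) (by norm_num)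
        have hεs : ε ≤ Real.sqrt (A / C) := min_le_right _ _
        have h2 : ε ^ (2:ℝ) ≤ A / C := by
          have := Real.sq_sqrt (show (0:ℝ) ≤ A / C by positivity)
          have h3 : ε ^ (2:ℝ) = ε ^ (2:ℕ) := by
            rw [← Real.rpow_natCast]; norm_num
          rw [h3]
          nlinarith [Real.sqrt_nonneg (A / C)]
        have h4 : C ≤ A * ε ^ (-2:ℝ) := by
          rw [Real.rpow_neg hε0.le]
          have hεp : 0 < ε ^ (2:ℝ) := Real.rpow_pos_of_pos hε0 2
          have h5 : C * ε ^ (2:ℝ) ≤ A := by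
            have h6 := mul_le_mul_of_nonneg_left h2 hC.le
            rw [mul_div_cancel₀ _ (ne_of_gt hC)] at h6
            linarith
          rw [← div_eq_mul_inv, le_div_iff₀ hεp]
          exact h5
        have h6 : ε ^ (p - 2) ≤ 1 := Real.rpow_le_one hε0.le hε1 hp2.le
        have h7 : C * ε ^ (p - 2) ≤ C := by nlinarith
        simp only [hφ_def]
        linarith
    · refine ⟨min (1/2) ((B / C) ^ ((p - 2)⁻¹)), ?_, ?_, ?_⟩
      · apply lt_min (by norm_num)
        exact Real.rpow_pos_of_pos (by positivity) _
      · exact lt_of_le_of_lt (min_le_left _ _) (by norm_num)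
      · set ε := min (1/2) ((B / C) ^ ((p - 2)⁻¹)) with hε_def
        have hε0 : 0 < ε := by
          apply lt_min (by norm_num)
          exact Real.rpow_pos_of_pos (by positivity) _
        have hεs : ε ≤ (B / C) ^ ((p - 2)⁻¹) := min_le_right _ _
        have h2 : ε ^ (p - 2) ≤ B / C := by
          have h3 : ε ^ (p - 2) ≤ ((B / C) ^ ((p - 2)⁻¹)) ^ (p - 2) :=
            Real.rpow_le_rpow hε0.le hεs hp2.le
          have h4 : ((B / C) ^ ((p - 2)⁻¹)) ^ (p - 2) = B / C := by
            rw [← Real.rpow_mul (by positivity), inv_mul_cancel₀ (ne_of_gt hp2), Real.rpow_one]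
          linarith [h4 ▸ h3]
        have h5 : C * ε ^ (p - 2) ≤ B := by
          rw [← le_div_iff₀' hC]
          exact h2
        have h6 : 0 ≤ A * ε ^ (-2:ℝ) := by positivity
        simp only [hφ_def]
        linarith
  -- continuity of φ on [ε, 1]
  have hcont : ContinuousOn φ (Set.Icc ε 1) := by
    have hne : ∀ x ∈ Set.Icc ε 1, x ≠ 0 ∨ 0 ≤ (-2:ℝ) := by
      intro x hx; left; exact ne_of_gt (lt_of_lt_of_le hε0 hx.1)
    have hne2 : ∀ x ∈ Set.Icc ε 1, x ≠ 0 ∨ 0 ≤ p - 2 := by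
      intro x hx; right; exact hp2.le
    exact (((continuousOn_const.mul (continuousOn_id.rpow_const hne)).add
      continuousOn_const).sub (continuousOn_const.mul (continuousOn_id.rpow_const hne2)))
  -- IVT
  have hIVT := intermediate_value_Icc' hε1.le hcont
  have h0mem : (0:ℝ) ∈ Set.Icc (φ 1) (φ ε) := ⟨hφ1.le, hφε⟩
  obtain ⟨c, hc, hφc⟩ := hIVT h0mem
  have hc0 : 0 < c := lt_of_lt_of_le hε0 hc.1
  have hc1 : c < 1 := by
    rcases lt_or_eq_of_le hc.2 with h | h
    · exact h
    · exfalso; rw [h] at hφc; linarith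
  refine ⟨c, ⟨⟨hc0, hc1⟩, (hiff c hc0).mpr hφc⟩, ?_⟩
  rintro y ⟨⟨hy0, hy1⟩, hGy⟩
  have hφy : φ y = 0 := (hiff y hy0).mp hGy
  rcases lt_trichotomy y c with h | h | h
  · exfalso; have := hmono y c hy0 h; rw [hφy, hφc] at this; linarith
  · exact h
  · exfalso; have := hmono c y hc0 h; rw [hφy, hφc] at this; linarith
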